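/- For odd n ≥ 3, the dihedral group D_{2n} = ⟨g, h | g^n = h^2 = 1, gh = hg^{n-1}⟩ has exactly n² + 1 endomorphisms and exactly n·φ(n) automorphisms. -/

import Mathlib

open DihedralGroup

namespace DihedralEndoAux

variable {n : ℕ}

/-- The endomorphism of the dihedral group sending `r k ↦ r (i*k)` and `sr k ↦ sr (j + i*k)`. -/
def endo (i j : ZMod n) : DihedralGroup n →* DihedralGroup n where
  toFun x := match x with
    | .r k => .r (i * k)
    | .sr k => .sr (j + i * k)
  map_one' := by simp [one_def, -r_zero]
  map_mul' x y := by
    rcases x with k | k <;> rcases y with l | l <;>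
      simp only [r_mul_r, r_mul_sr, sr_mul_r, sr_mul_sr] <;> (congr 1; ring)

@[simp] lemma endo_r (i j k : ZMod n) : endo i j (DihedralGroup.r k) = DihedralGroup.r (i * k) := rfl
@[simp] lemma endo_sr (i j k : ZMod n) :
    endo i j (DihedralGroup.sr k) = DihedralGroup.sr (j + i * k) := rfl

lemma sr_sq (k : ZMod n) : DihedralGroup.sr k * DihedralGroup.sr k = 1 := by
  simp [one_def, -r_zero]

lemma sq_one_of_odd' {G : Type*} [Monoid G] {N : ℕ} (hodd : Odd N) {x : G}
    (h2 : x ^ 2 = 1) (hn : x ^ N = 1) : x = 1 := by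
  obtain ⟨k, hk⟩ := hodd
  have hk' : N = 2 * k + 1 := by omega
  subst hk'
  rw [pow_succ, pow_mul, h2, one_pow, one_mul] at hn
  exact hn

lemma sq_one_of_odd (hodd : Odd n) {x : DihedralGroup n} (h2 : x ^ 2 = 1) (hn : x ^ n = 1) :
    x = 1 := sq_one_of_odd' hodd h2 hn

lemma two_mul_eq_zero (hodd : Odd n) {m : ZMod n} (h : 2 * m = 0) : m = 0 := by
  have hcop : Nat.Coprime 2 n := Nat.coprime_two_left.mpr hodd
  have hu : IsUnit (2 : ZMod n) := (ZMod.unitOfCoprime 2 hcop).isUnit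
  obtain ⟨u, hu⟩ := hu
  calc m = ↑u⁻¹ * (↑u * m) := by rw [← mul_assoc, u.inv_mul, one_mul]
    _ = 0 := by rw [hu, h, mul_zero]

lemma r_cast_val [NeZero n] (k : ZMod n) : ((k.val : ZMod n)) = k := by
  simp [ZMod.natCast_val, ZMod.cast_id]

lemma r_pow (i : ZMod n) (t : ℕ) :
    (DihedralGroup.r i) ^ t = DihedralGroup.r ((t : ZMod n) * i) := by
  induction t with
  | zero => rw [pow_zero, Nat.cast_zero, zero_mul, one_def]
  | succ t ih => rw [pow_succ, ih, r_mul_r]; congr 1; push_cast; ring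

lemma f_r [NeZero n] (f : DihedralGroup n →* DihedralGroup n) (k : ZMod n) :
    f (DihedralGroup.r k) = f (DihedralGroup.r 1) ^ k.val := by
  rw [← map_pow, r_one_pow, r_cast_val]

lemma classify [NeZero n] (hodd : Odd n) (f : DihedralGroup n →* DihedralGroup n) :
    f = 1 ∨ ∃ i j : ZMod n, f = endo i j := by
  have hsr0 : ∀ k : ZMod n, f (DihedralGroup.sr k) ^ 2 = 1 := fun k => by
    rw [pow_two, ← map_mul, sr_sq, map_one]
  have hr1 : f (DihedralGroup.r 1) = f (DihedralGroup.sr 0) * f (DihedralGroup.sr 1) := by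
    rw [← map_mul]; norm_num
  have hrn : f (DihedralGroup.r 1) ^ n = 1 := by rw [← map_pow, r_one_pow_n, map_one]
  rcases h0 : f (DihedralGroup.sr 0) with m | j
  · -- f (sr 0) is a rotation; must be 1, and then f = 1
    left
    have h2 : 2 * m = 0 := by
      have hx := hsr0 0
      rw [h0, pow_two, r_mul_r, one_def] at hx
      have := DihedralGroup.r.inj hx
      linear_combination this
    have hm : m = 0 := two_mul_eq_zero hodd h2
    subst hm
    rw [← one_def] at h0
    have hr1' : f (DihedralGroup.r 1) = f (DihedralGroup.sr 1) := by rw [hr1, h0, one_mul]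
    have h2' : f (DihedralGroup.r 1) ^ 2 = 1 := by rw [hr1']; exact hsr0 1
    have hone : f (DihedralGroup.r 1) = 1 := sq_one_of_odd hodd h2' hrn
    ext x
    simp only [MonoidHom.one_apply]
    rcases x with k | k
    · rw [f_r, hone, one_pow]
    · have hx : DihedralGroup.sr k = DihedralGroup.sr 0 * DihedralGroup.r k := by simp
      rw [hx, map_mul, h0, one_mul, f_r, hone, one_pow]
  · -- f (sr 0) is a reflection
    right
    rcases h1 : f (DihedralGroup.sr 1) with m | m
    · -- impossible: then f (r 1) would be a reflection with odd order dividing n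
      exfalso
      have hfr1 : f (DihedralGroup.r 1) = DihedralGroup.sr (j + m) := by
        rw [hr1, h0, h1, sr_mul_r]
      have h2' : f (DihedralGroup.r 1) ^ 2 = 1 := by rw [hfr1, pow_two, sr_sq]
      have hone := sq_one_of_odd hodd h2' hrn
      rw [hone, one_def] at hfr1
      exact absurd hfr1 (by simp [one_def, -r_zero])
    · refine ⟨m - j, j, ?_⟩
      have hfr1 : f (DihedralGroup.r 1) = DihedralGroup.r (m - j) := by
        rw [hr1, h0, h1, sr_mul_sr]
      have hfr : ∀ k : ZMod n, f (DihedralGroup.r k) = DihedralGroup.r ((m - j) * k) := by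
        intro k
        rw [f_r, hfr1, r_pow, r_cast_val, mul_comm]
      ext x
      rcases x with k | k
      · rw [hfr, endo_r]
      · have hx : DihedralGroup.sr k = DihedralGroup.sr 0 * DihedralGroup.r k := by simp
        rw [endo_sr]
        conv_lhs => rw [hx]
        rw [map_mul, h0, hfr, sr_mul_r]

lemma endo_bij [NeZero n] (hodd : Odd n) :
    Function.Bijective (fun o : Option (ZMod n × ZMod n) =>
      (o.elim 1 fun p => endo p.1 p.2 : DihedralGroup n →* DihedralGroup n)) := by
  constructor
  · rintro (_ | ⟨i, j⟩) (_ | ⟨i', j'⟩) h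
    · rfl
    · exfalso
      have := DFunLike.congr_fun h (DihedralGroup.sr 0)
      simp [one_def, -r_zero] at this
    · exfalso
      have := DFunLike.congr_fun h (DihedralGroup.sr 0)
      simp [one_def, -r_zero] at this
    · have h1 := DFunLike.congr_fun h (DihedralGroup.r 1)
      have h2 := DFunLike.congr_fun h (DihedralGroup.sr 0)
      simp only [Option.elim, endo_r, endo_sr, mul_one, mul_zero, add_zero,
        DihedralGroup.r.injEq, DihedralGroup.sr.injEq] at h1 h2
      subst h1; subst h2; rfl
  · intro f
    rcases classify hodd f with h | ⟨i, j, h⟩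
    · exact ⟨none, h.symm⟩
    · exact ⟨some (i, j), h.symm⟩

lemma card_endo [NeZero n] (hodd : Odd n) :
    Nat.card (DihedralGroup n →* DihedralGroup n) = n ^ 2 + 1 := by
  rw [← Nat.card_eq_of_bijective _ (endo_bij hodd), Nat.card_eq_fintype_card,
    Fintype.card_option, Fintype.card_prod, ZMod.card, sq]

/-- The automorphism of the dihedral group attached to a unit `u` and `j : ZMod n`. -/
def aut (u : (ZMod n)ˣ) (j : ZMod n) : MulAut (DihedralGroup n) where
  toFun := endo (u : ZMod n) j
  invFun := endo ((u⁻¹ : (ZMod n)ˣ) : ZMod n) (-(((u⁻¹ : (ZMod n)ˣ) : ZMod n) * j))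
  left_inv x := by
    have h : ((u⁻¹ : (ZMod n)ˣ) : ZMod n) * (u : ZMod n) = 1 := u.inv_mul
    rcases x with k | k <;> simp only [endo_r, endo_sr] <;> congr 1 <;>
      linear_combination (k : ZMod n) * h
  right_inv x := by
    have h : ((u : (ZMod n)ˣ) : ZMod n) * ((u⁻¹ : (ZMod n)ˣ) : ZMod n) = 1 := u.mul_inv
    rcases x with k | k <;> simp only [endo_r, endo_sr] <;> congr 1
    · linear_combination (k : ZMod n) * h
    · linear_combination ((k : ZMod n) - j) * h
  map_mul' := map_mul (endo (u : ZMod n) j)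

lemma aut_bij [NeZero n] (hodd : Odd n) :
    Function.Bijective (fun p : (ZMod n)ˣ × ZMod n => aut p.1 p.2) := by
  constructor
  · rintro ⟨u, j⟩ ⟨u', j'⟩ h
    have h1 := DFunLike.congr_fun h (DihedralGroup.r 1)
    have h2 := DFunLike.congr_fun h (DihedralGroup.sr 0)
    simp only [aut, MulEquiv.coe_mk, Equiv.coe_fn_mk, endo_r, endo_sr, mul_one, mul_zero,
      add_zero, DihedralGroup.r.injEq, DihedralGroup.sr.injEq] at h1 h2
    have : u = u' := Units.ext h1
    subst this; subst h2; rfl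
  · intro α
    rcases classify hodd α.toMonoidHom with h | ⟨i, j, h⟩
    · exfalso
      have h1 : α (DihedralGroup.sr 0) = 1 := by
        have := DFunLike.congr_fun h (DihedralGroup.sr 0); exact this
      have := α.injective (h1.trans (map_one α).symm)
      simp [one_def, -r_zero] at this
    · obtain ⟨x, hx⟩ := α.surjective (DihedralGroup.r 1)
      have hα : ∀ y, α y = endo i j y := fun y => DFunLike.congr_fun h y
      rcases x with k | k
      · rw [hα] at hx
        simp only [endo_r, DihedralGroup.r.injEq] at hx
        refine ⟨⟨⟨i, k, hx, by rw [mul_comm]; exact hx⟩, j⟩, ?_⟩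
        exact MulEquiv.ext fun y => (hα y).symm
      · rw [hα] at hx
        simp at hx
    
lemma card_aut [NeZero n] (hodd : Odd n) :
    Nat.card (MulAut (DihedralGroup n)) = n * Nat.totient n := by
  rw [← Nat.card_eq_of_bijective _ (aut_bij hodd), Nat.card_eq_fintype_card,
    Fintype.card_prod, ZMod.card_units_eq_totient, ZMod.card, mul_comm]

end DihedralEndoAux

/-- For odd `n ≥ 3`, the dihedral group `D_{2n}` has exactly `n² + 1` endomorphisms
and exactly `n·φ(n)` automorphisms. -/
theorem card_endomorphisms_dihedral_odd (n : ℕ) (hn : 3 ≤ n) (hodd : Odd n) :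
    Nat.card (DihedralGroup n →* DihedralGroup n) = n ^ 2 + 1 ∧
    Nat.card (MulAut (DihedralGroup n)) = n * Nat.totient n := by
  haveI : NeZero n := ⟨by omega⟩
  exact ⟨DihedralEndoAux.card_endo hodd, DihedralEndoAux.card_aut hodd⟩
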